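/- arXiv:1510.01123 — 3 statements merged into one kernel-verified Lean document; each statement's English description precedes it below -/
import Mathlib

section
/- Let γ ∈ [0,1] and for x ∈ ℝ³ let σ(x) = |x|^{1+γ/2}(I₃ - xx*/|x|²) (σ(0)=0). Then for all x, y ∈ ℝ³: ‖σ(x) - σ(y)‖² ≤ 2|x|^{2+γ} + 2|y|^{2+γ} - 4(|x||y|)^{γ/2}(x·y). -/
noncomputable section
open Matrix
open scoped Classical

abbrev E3 := EuclideanSpace ℝ (Fin 3)
abbrev M3 := Matrix (Fin 3) (Fin 3) ℝ

def proj3 (x : E3) : M3 :=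
  1 - (‖x‖ ^ 2)⁻¹ • Matrix.vecMulVec (fun i => x i) (fun i => x i)

def sigmat (γ : ℝ) (v : E3) : M3 := if v = 0 then 0 else (‖v‖ ^ (1 + γ / 2)) • proj3 v

def frobSq (A : M3) : ℝ := Matrix.trace (A * Aᵀ)

lemma vmv_transpose (u v : Fin 3 → ℝ) : (vecMulVec u v)ᵀ = vecMulVec v u := by
  ext i j; simp [vecMulVec_apply, transpose_apply, mul_comm]

lemma vmv_mul (u v w z : Fin 3 → ℝ) :
    vecMulVec u v * vecMulVec w z = (∑ k, v k * w k) • vecMulVec u z := by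
  ext i j
  simp [Matrix.mul_apply, vecMulVec_apply, Finset.sum_mul, Finset.mul_sum]
  exact Finset.sum_congr rfl (fun k _ => by ring)

lemma vmv_trace (u v : Fin 3 → ℝ) : Matrix.trace (vecMulVec u v) = ∑ i, u i * v i := by
  simp [Matrix.trace, Matrix.diag, vecMulVec_apply]

lemma inner_sum' (x y : E3) : (inner ℝ x y : ℝ) = ∑ i, x i * y i := by
  simp [PiLp.inner_apply, RCLike.inner_apply, mul_comm]

lemma norm_sq_sum (x : E3) : ‖x‖ ^ 2 = ∑ i, x i * x i := by
  rw [← real_inner_self_eq_norm_sq]; simp only [PiLp.inner_apply, RCLike.inner_apply, conj_trivial]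

lemma proj3_transpose (x : E3) : (proj3 x)ᵀ = proj3 x := by
  unfold proj3
  rw [transpose_sub, transpose_smul, transpose_one, vmv_transpose]

lemma trace_proj_mul (x y : E3) (hx : x ≠ 0) (hy : y ≠ 0) :
    Matrix.trace (proj3 x * proj3 y)
      = 1 + (inner ℝ x y : ℝ) ^ 2 / (‖x‖ ^ 2 * ‖y‖ ^ 2) := by
  have hx2 : (‖x‖ : ℝ) ^ 2 ≠ 0 := pow_ne_zero _ (norm_ne_zero_iff.mpr hx)
  have hy2 : (‖y‖ : ℝ) ^ 2 ≠ 0 := pow_ne_zero _ (norm_ne_zero_iff.mpr hy)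
  unfold proj3
  simp only [sub_mul, mul_sub, one_mul, mul_one, Matrix.smul_mul, Matrix.mul_smul, vmv_mul,
    smul_smul, Matrix.trace_sub, Matrix.trace_smul, Matrix.trace_one, vmv_trace, smul_eq_mul]
  rw [← norm_sq_sum, ← norm_sq_sum, ← inner_sum']
  simp only [Fintype.card_fin, Nat.cast_ofNat]
  field_simp
  ring

lemma frobSq_sigmat (γ : ℝ) (hγ : 0 ≤ γ) (v : E3) :
    frobSq (sigmat γ v) = 2 * ‖v‖ ^ (2 + γ) := by
  unfold frobSq sigmat
  split
  · subst ‹v = 0›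
    simp [Real.zero_rpow (show (2:ℝ) + γ ≠ 0 by positivity)]
  · rename_i hv
    have hn : (0:ℝ) < ‖v‖ := norm_pos_iff.mpr hv
    rw [transpose_smul, proj3_transpose, Matrix.smul_mul, Matrix.mul_smul, smul_smul,
      Matrix.trace_smul, trace_proj_mul v v hv hv]
    rw [real_inner_self_eq_norm_sq]
    have h1 : (‖v‖ ^ 2 : ℝ) ^ 2 / (‖v‖ ^ 2 * ‖v‖ ^ 2) = 1 := by
      field_simp
    rw [h1]
    have h2 : ‖v‖ ^ (1 + γ / 2) * ‖v‖ ^ (1 + γ / 2) = ‖v‖ ^ (2 + γ) := by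
      rw [← Real.rpow_add hn]; ring_nf
    rw [smul_eq_mul, show (1:ℝ) + 1 = 2 by norm_num, ← h2]; ring

lemma trace_cross (γ : ℝ) (hγ : 0 ≤ γ) (x y : E3) :
    2 * (‖x‖ * ‖y‖) ^ (γ / 2) * (inner ℝ x y : ℝ)
      ≤ Matrix.trace (sigmat γ x * (sigmat γ y)ᵀ) := by
  unfold sigmat
  by_cases hx : x = 0
  · simp [hx]
  by_cases hy : y = 0
  · simp [hy]
  rw [if_neg hx, if_neg hy, transpose_smul, proj3_transpose, Matrix.smul_mul, Matrix.mul_smul,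
    smul_smul, Matrix.trace_smul, trace_proj_mul x y hx hy, smul_eq_mul]
  have hX : (0:ℝ) < ‖x‖ := norm_pos_iff.mpr hx
  have hY : (0:ℝ) < ‖y‖ := norm_pos_iff.mpr hy
  set X := ‖x‖
  set Y := ‖y‖
  set s := (inner ℝ x y : ℝ)
  have hab : X ^ (1 + γ / 2) * Y ^ (1 + γ / 2) = (X * Y) ^ (γ / 2) * (X * Y) := by
    have h : (1 : ℝ) + γ / 2 = γ / 2 + 1 := by ring
    rw [h, Real.rpow_add hX, Real.rpow_add hY, Real.rpow_one,
      Real.mul_rpow hX.le hY.le, Real.rpow_one]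
    ring_nf
  rw [hab]
  have hk : (0:ℝ) ≤ (X * Y) ^ (γ / 2) := Real.rpow_nonneg (by positivity) _
  have hP : (0:ℝ) < X * Y := by positivity
  set P := X * Y with hPdef
  have h2 : X ^ 2 * Y ^ 2 = P ^ 2 := by rw [hPdef]; ring
  rw [h2]
  have h3 : 2 * s ≤ P * (1 + s ^ 2 / P ^ 2) := by
    rw [← sub_nonneg]
    have : P * (1 + s ^ 2 / P ^ 2) - 2 * s = (P - s) ^ 2 / P := by
      field_simp; ring
    rw [this]; positivity
  calc 2 * P ^ (γ / 2) * s = P ^ (γ / 2) * (2 * s) := by ring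
    _ ≤ P ^ (γ / 2) * (P * (1 + s ^ 2 / P ^ 2)) := mul_le_mul_of_nonneg_left h3 hk
    _ = P ^ (γ / 2) * P * (1 + s ^ 2 / P ^ 2) := by ring

theorem sigma_diff_bound (γ : ℝ) (hγ : γ ∈ Set.Icc (0:ℝ) 1) (x y : E3) :
    frobSq (sigmat γ x - sigmat γ y)
      ≤ 2 * ‖x‖ ^ (2 + γ) + 2 * ‖y‖ ^ (2 + γ)
        - 4 * (‖x‖ * ‖y‖) ^ (γ / 2) * (inner ℝ x y : ℝ) := by
  obtain ⟨h0, h1⟩ := hγ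
  set A := sigmat γ x
  set B := sigmat γ y
  have hBA : Matrix.trace (B * Aᵀ) = Matrix.trace (A * Bᵀ) := by
    rw [← Matrix.trace_transpose (B * Aᵀ), transpose_mul, transpose_transpose]
  have expand : frobSq (A - B) = frobSq A + frobSq B - 2 * Matrix.trace (A * Bᵀ) := by
    unfold frobSq
    rw [transpose_sub, sub_mul, mul_sub, mul_sub, Matrix.trace_sub, Matrix.trace_sub,
      Matrix.trace_sub, hBA]
    ring
  rw [expand, frobSq_sigmat γ h0 x, frobSq_sigmat γ h0 y]
  have := trace_cross γ h0 x y
  linarith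
end
end

section
/- Let m be a probability measure on a measurable space F and σ₁, σ₂ : F → M₃(ℝ) measurable with Σᵢ = ∫_F σᵢ(x) σᵢ(x)* m(dx) invertible for i = 1, 2. Let U(Σ₁,Σ₂) = Σ₂^{-1/2} Σ₁^{-1/2} (Σ₁^{1/2} Σ₂ Σ₁^{1/2})^{1/2}. Then U(Σ₁,Σ₂) is orthogonal and ‖Σ₁^{1/2} - Σ₂^{1/2} U(Σ₁,Σ₂)‖² ≤ ∫_F ‖σ₁(x) - σ₂(x)‖² m(dx). -/
noncomputable section
open Matrix MeasureTheory

section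
open scoped ComplexOrder

def Matrix.PosSemidef.sqrt {n 𝕜 : Type*} [Fintype n] [RCLike 𝕜] [DecidableEq n]
    {A : Matrix n n 𝕜} (hA : A.PosSemidef) : Matrix n n 𝕜 :=
  hA.1.eigenvectorUnitary.1 * diagonal ((↑) ∘ (√·) ∘ hA.1.eigenvalues) *
  (star hA.1.eigenvectorUnitary : Matrix n n 𝕜)

lemma Matrix.PosSemidef.posSemidef_sqrt {n 𝕜 : Type*} [Fintype n] [RCLike 𝕜] [DecidableEq n]
    {A : Matrix n n 𝕜} (hA : A.PosSemidef) : hA.sqrt.PosSemidef := by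
  have h : (diagonal ((↑) ∘ (√·) ∘ hA.1.eigenvalues) : Matrix n n 𝕜).PosSemidef := by
    refine posSemidef_diagonal_iff.mpr fun i ↦ ?_
    rw [Function.comp_apply, RCLike.nonneg_iff]
    constructor
    · simp only [Function.comp_apply, RCLike.ofReal_re]
      exact Real.sqrt_nonneg _
    · simp only [Function.comp_apply, RCLike.ofReal_im]
  have := h.mul_mul_conjTranspose_same (hA.1.eigenvectorUnitary : Matrix n n 𝕜)
  simpa [Matrix.PosSemidef.sqrt, Matrix.star_eq_conjTranspose] using this

lemma Matrix.PosSemidef.sqrt_mul_self {n 𝕜 : Type*} [Fintype n] [RCLike 𝕜] [DecidableEq n]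
    {A : Matrix n n 𝕜} (hA : A.PosSemidef) : hA.sqrt * hA.sqrt = A := by
  let C : Matrix n n 𝕜 := hA.1.eigenvectorUnitary
  let E := diagonal ((↑) ∘ Real.sqrt ∘ hA.1.eigenvalues : n → 𝕜)
  suffices C * (E * (star C * C) * E) * star C = A by
    rw [Matrix.PosSemidef.sqrt]
    change (C * E * star C) * (C * E * star C) = A
    simpa only [← mul_assoc] using this
  have : star C * C = 1 := by simp [C]
  rw [this, mul_one]
  have : E * E = diagonal ((↑) ∘ hA.1.eigenvalues) := by
    rw [diagonal_mul_diagonal]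
    congr! with v
    simp [← pow_two, ← RCLike.ofReal_pow, Real.sq_sqrt (hA.eigenvalues_nonneg v)]
  rw [this]
  conv_rhs => rw [hA.1.spectral_theorem]
  rfl

end

lemma frobSq_sub (X Y : M3) : frobSq (X - Y)
    = frobSq X + frobSq Y - Matrix.trace (X * Yᵀ) - Matrix.trace (Y * Xᵀ) := by
  simp [frobSq, Matrix.sub_mul, Matrix.mul_sub, Matrix.transpose_sub, Matrix.trace_sub]; ring

lemma frobSq_nonneg (X : M3) : 0 ≤ frobSq X := by
  simp only [frobSq, Matrix.trace, Matrix.diag, Matrix.mul_apply, Matrix.transpose_apply]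
  exact Finset.sum_nonneg fun i _ => Finset.sum_nonneg fun k _ => mul_self_nonneg _

lemma trace_conj3 (C D M : M3) (h : D * C = 1) :
    Matrix.trace (C * M * D) = Matrix.trace M := by
  rw [Matrix.trace_mul_comm, ← Matrix.mul_assoc, h, Matrix.one_mul]

lemma trace_integral_aux {F : Type*} [MeasurableSpace F] (m : Measure F)
    (g : F → M3) (hg : ∀ i j, Integrable (fun x => g x i j) m) (S W : M3)
    (hS : S = Matrix.of fun i j => ∫ x, g x i j ∂m) :
    Integrable (fun x => Matrix.trace (W * g x)) m ∧
    ∫ x, Matrix.trace (W * g x) ∂m = Matrix.trace (W * S) := by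
  have hfun : ∀ x, Matrix.trace (W * g x) = ∑ i, ∑ k, W i k * g x k i := by
    intro x; simp [Matrix.trace, Matrix.diag, Matrix.mul_apply]
  have hint : Integrable (fun x => Matrix.trace (W * g x)) m := by
    simp only [hfun]
    exact integrable_finset_sum _ fun i _ =>
      integrable_finset_sum _ fun k _ => (hg k i).const_mul _
  refine ⟨hint, ?_⟩
  simp only [hfun]
  rw [integral_finset_sum _ fun i _ =>
    integrable_finset_sum _ fun k _ => (hg k i).const_mul (W i k)]
  have : Matrix.trace (W * S) = ∑ i, ∑ k, W i k * S k i := by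
    simp [Matrix.trace, Matrix.diag, Matrix.mul_apply]
  rw [this]
  refine Finset.sum_congr rfl fun i _ => ?_
  rw [integral_finset_sum _ fun k _ => (hg k i).const_mul _]
  refine Finset.sum_congr rfl fun k _ => ?_
  rw [integral_const_mul, hS]; rfl

theorem gaussian_optimal_coupling
    {F : Type*} [MeasurableSpace F] (m : Measure F) [IsProbabilityMeasure m]
    (σ₁ σ₂ : F → M3)
    (hσ₁ : ∀ i j, Integrable (fun x => (σ₁ x * (σ₁ x)ᵀ) i j) m)
    (hσ₂ : ∀ i j, Integrable (fun x => (σ₂ x * (σ₂ x)ᵀ) i j) m)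
    (hdiff : Integrable (fun x => frobSq (σ₁ x - σ₂ x)) m)
    (S1 S2 : M3)
    (hS1def : S1 = Matrix.of fun i j => ∫ x, (σ₁ x * (σ₁ x)ᵀ) i j ∂m)
    (hS2def : S2 = Matrix.of fun i j => ∫ x, (σ₂ x * (σ₂ x)ᵀ) i j ∂m)
    (hS1 : S1.PosDef) (hS2 : S2.PosDef)
    (hP : (hS1.posSemidef.sqrt * S2 * hS1.posSemidef.sqrt).PosSemidef)
    (U : M3)
    (hU : U = (hS2.posSemidef.sqrt)⁻¹ * (hS1.posSemidef.sqrt)⁻¹ * hP.sqrt) :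
    U * Uᵀ = 1 ∧
    frobSq (hS1.posSemidef.sqrt - hS2.posSemidef.sqrt * U)
      ≤ ∫ x, frobSq (σ₁ x - σ₂ x) ∂m := by
  set A : M3 := hS1.posSemidef.sqrt with hA
  set B : M3 := hS2.posSemidef.sqrt with hB
  set P : M3 := hP.sqrt with hPdef
  have hAA : A * A = S1 := hS1.posSemidef.sqrt_mul_self
  have hBB : B * B = S2 := hS2.posSemidef.sqrt_mul_self
  have hPP : P * P = A * S2 * A := hP.sqrt_mul_self
  have hAsym : Aᵀ = A := hS1.posSemidef.posSemidef_sqrt.1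
  have hBsym : Bᵀ = B := hS2.posSemidef.posSemidef_sqrt.1
  have hPsym : Pᵀ = P := hP.posSemidef_sqrt.1
  have hdetA : IsUnit A.det := by
    have h : A.det * A.det = S1.det := by rw [← Matrix.det_mul, hAA]
    exact isUnit_iff_ne_zero.mpr fun h0 => (ne_of_gt hS1.det_pos) (by rw [← h, h0, mul_zero])
  have hdetB : IsUnit B.det := by
    have h : B.det * B.det = S2.det := by rw [← Matrix.det_mul, hBB]
    exact isUnit_iff_ne_zero.mpr fun h0 => (ne_of_gt hS2.det_pos) (by rw [← h, h0, mul_zero])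
  have hdetP : IsUnit P.det := by
    have h : P.det * P.det = A.det * S2.det * A.det := by
      rw [← Matrix.det_mul, hPP, Matrix.det_mul, Matrix.det_mul]
    exact isUnit_iff_ne_zero.mpr fun h0 =>
      (mul_ne_zero (mul_ne_zero hdetA.ne_zero (ne_of_gt hS2.det_pos)) hdetA.ne_zero)
        (by rw [← h, h0, mul_zero])
  have hAinv : A * A⁻¹ = 1 := Matrix.mul_nonsing_inv A hdetA
  have hAinv' : A⁻¹ * A = 1 := Matrix.nonsing_inv_mul A hdetA
  have hBinv : B * B⁻¹ = 1 := Matrix.mul_nonsing_inv B hdetB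
  have hPinv : P * P⁻¹ = 1 := Matrix.mul_nonsing_inv P hdetP
  have hPinv' : P⁻¹ * P = 1 := Matrix.nonsing_inv_mul P hdetP
  have hAinvsym : (A⁻¹)ᵀ = A⁻¹ := by rw [Matrix.transpose_nonsing_inv, hAsym]
  have hBinvsym : (B⁻¹)ᵀ = B⁻¹ := by rw [Matrix.transpose_nonsing_inv, hBsym]
  have hBU : B * U = A⁻¹ * P := by
    rw [hU, ← Matrix.mul_assoc, ← Matrix.mul_assoc, hBinv, Matrix.one_mul]
  have hconjA : A⁻¹ * (A * S2 * A) * A⁻¹ = S2 := by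
    simp only [← Matrix.mul_assoc, hAinv', Matrix.one_mul]
    rw [Matrix.mul_assoc, hAinv, Matrix.mul_one]
  -- Part 1 : U * Uᵀ = 1
  have hUUT : U * Uᵀ = 1 := by
    rw [hU]
    change B⁻¹ * A⁻¹ * P * (B⁻¹ * A⁻¹ * P)ᵀ = 1
    simp only [Matrix.transpose_mul, hPsym, hAinvsym, hBinvsym]
    have e1 : B⁻¹ * A⁻¹ * P * (P * (A⁻¹ * B⁻¹))
        = B⁻¹ * (A⁻¹ * (P * P) * A⁻¹) * B⁻¹ := by simp only [Matrix.mul_assoc]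
    rw [e1, hPP, hconjA, ← hBB]
    rw [show B⁻¹ * (B * B) * B⁻¹ = B⁻¹ * B * (B * B⁻¹) by simp only [Matrix.mul_assoc],
      hBinv, Matrix.nonsing_inv_mul B hdetB, Matrix.one_mul]
  refine ⟨hUUT, ?_⟩
  -- LHS = tr S1 + tr S2 - 2 tr P
  have hLHS : frobSq (A - B * U)
      = Matrix.trace S1 + Matrix.trace S2 - 2 * Matrix.trace P := by
    rw [hBU, frobSq_sub]
    have h1 : frobSq A = Matrix.trace S1 := by rw [frobSq, hAsym, hAA]
    have h2 : frobSq (A⁻¹ * P) = Matrix.trace S2 := by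
      rw [frobSq, Matrix.transpose_mul, hPsym, hAinvsym,
        show A⁻¹ * P * (P * A⁻¹) = A⁻¹ * (P * P) * A⁻¹ by simp only [Matrix.mul_assoc],
        hPP, hconjA]
    have h3 : Matrix.trace (A * (A⁻¹ * P)ᵀ) = Matrix.trace P := by
      rw [Matrix.transpose_mul, hPsym, hAinvsym, ← Matrix.mul_assoc,
        Matrix.trace_mul_comm, ← Matrix.mul_assoc, hAinv', Matrix.one_mul]
    have h4 : Matrix.trace (A⁻¹ * P * Aᵀ) = Matrix.trace P := by
      rw [hAsym, Matrix.trace_mul_comm, ← Matrix.mul_assoc, hAinv, Matrix.one_mul]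
    rw [h1, h2, h3, h4]; ring
  rw [hLHS]
  -- The matrix T and its square root C
  set T : M3 := A⁻¹ * P * A⁻¹ with hTdef
  have hPsd : P.PosSemidef := hP.posSemidef_sqrt
  have hT : T.PosSemidef := by
    have := hPsd.mul_mul_conjTranspose_same A⁻¹
    simpa [Matrix.conjTranspose_eq_transpose_of_trivial, hAinvsym] using this
  set C : M3 := hT.sqrt with hCdef
  have hCC : C * C = T := hT.sqrt_mul_self
  have hCsym : Cᵀ = C := hT.posSemidef_sqrt.1
  have hdetT : IsUnit T.det := by
    rw [hTdef, Matrix.det_mul, Matrix.det_mul]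
    exact ((Matrix.isUnit_nonsing_inv_det A hdetA).mul hdetP).mul
      (Matrix.isUnit_nonsing_inv_det A hdetA)
  have hdetC : IsUnit C.det := by
    have h : C.det * C.det = T.det := by rw [← Matrix.det_mul, hCC]
    exact isUnit_of_mul_isUnit_left (h ▸ hdetT)
  have hCinv : C * C⁻¹ = 1 := Matrix.mul_nonsing_inv C hdetC
  have hCinv' : C⁻¹ * C = 1 := Matrix.nonsing_inv_mul C hdetC
  have hCinvsym : (C⁻¹)ᵀ = C⁻¹ := by rw [Matrix.transpose_nonsing_inv, hCsym]
  have hCCinv : C⁻¹ * C⁻¹ = T⁻¹ := by rw [← Matrix.mul_inv_rev, hCC]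
  have hTinv : T⁻¹ = A * P⁻¹ * A := by
    rw [hTdef, Matrix.mul_inv_rev, Matrix.mul_inv_rev,
      Matrix.nonsing_inv_nonsing_inv A hdetA, Matrix.mul_assoc]
  -- the traces of T*S1 and T⁻¹*S2 both equal trace P
  have htr1 : Matrix.trace (T * S1) = Matrix.trace P := by
    have e : T * S1 = A⁻¹ * (P * A) := by
      rw [hTdef, ← hAA,
        show A⁻¹ * P * A⁻¹ * (A * A) = A⁻¹ * (P * (A⁻¹ * A * A)) by simp only [Matrix.mul_assoc],
        hAinv', Matrix.one_mul]
    rw [e, Matrix.trace_mul_comm, Matrix.mul_assoc, hAinv, Matrix.mul_one]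
  have htr2 : Matrix.trace (T⁻¹ * S2) = Matrix.trace P := by
    have e : T⁻¹ * S2 = A * (P⁻¹ * (A * S2)) := by rw [hTinv]; simp only [Matrix.mul_assoc]
    rw [e, Matrix.trace_mul_comm,
      show P⁻¹ * (A * S2) * A = P⁻¹ * (A * S2 * A) by simp only [Matrix.mul_assoc],
      ← hPP, ← Matrix.mul_assoc, hPinv', Matrix.one_mul]
  -- pointwise identity
  have key : ∀ s t : M3, frobSq (C * s - C⁻¹ * t)
      = frobSq (s - t) + Matrix.trace (T * (s * sᵀ)) + Matrix.trace (T⁻¹ * (t * tᵀ))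
        - frobSq s - frobSq t := by
    intro s t
    rw [frobSq_sub, frobSq_sub]
    have e1 : frobSq (C * s) = Matrix.trace (T * (s * sᵀ)) := by
      rw [frobSq, Matrix.transpose_mul, hCsym,
        show C * s * (sᵀ * C) = C * (s * sᵀ) * C by simp only [Matrix.mul_assoc],
        Matrix.trace_mul_comm, ← Matrix.mul_assoc, hCC]
    have e2 : frobSq (C⁻¹ * t) = Matrix.trace (T⁻¹ * (t * tᵀ)) := by
      rw [frobSq, Matrix.transpose_mul, hCinvsym,
        show C⁻¹ * t * (tᵀ * C⁻¹) = C⁻¹ * (t * tᵀ) * C⁻¹ by simp only [Matrix.mul_assoc],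
        Matrix.trace_mul_comm, ← Matrix.mul_assoc, hCCinv]
    have e3 : Matrix.trace (C * s * (C⁻¹ * t)ᵀ) = Matrix.trace (s * tᵀ) := by
      rw [Matrix.transpose_mul, hCinvsym,
        show C * s * (tᵀ * C⁻¹) = C * (s * tᵀ) * C⁻¹ by simp only [Matrix.mul_assoc]]
      exact trace_conj3 _ _ _ hCinv'
    have e4 : Matrix.trace (C⁻¹ * t * (C * s)ᵀ) = Matrix.trace (t * sᵀ) := by
      rw [Matrix.transpose_mul, hCsym,
        show C⁻¹ * t * (sᵀ * C) = C⁻¹ * (t * sᵀ) * C by simp only [Matrix.mul_assoc]]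
      exact trace_conj3 _ _ _ hCinv
    rw [e1, e2, e3, e4]; ring
  -- integrability and integral values
  obtain ⟨hi1, hv1⟩ := trace_integral_aux m _ hσ₁ S1 T hS1def
  obtain ⟨hi2, hv2⟩ := trace_integral_aux m _ hσ₂ S2 T⁻¹ hS2def
  obtain ⟨hi3, hv3⟩ := trace_integral_aux m _ hσ₁ S1 1 hS1def
  obtain ⟨hi4, hv4⟩ := trace_integral_aux m _ hσ₂ S2 1 hS2def
  have hfs1 : ∀ x, frobSq (σ₁ x) = Matrix.trace ((1 : M3) * (σ₁ x * (σ₁ x)ᵀ)) := by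
    intro x; rw [Matrix.one_mul, frobSq]
  have hfs2 : ∀ x, frobSq (σ₂ x) = Matrix.trace ((1 : M3) * (σ₂ x * (σ₂ x)ᵀ)) := by
    intro x; rw [Matrix.one_mul, frobSq]
  -- the nonnegative function φ
  have hφeq : (fun x => frobSq (C * σ₁ x - C⁻¹ * σ₂ x))
      = fun x => frobSq (σ₁ x - σ₂ x) + Matrix.trace (T * (σ₁ x * (σ₁ x)ᵀ))
        + Matrix.trace (T⁻¹ * (σ₂ x * (σ₂ x)ᵀ))
        - Matrix.trace ((1 : M3) * (σ₁ x * (σ₁ x)ᵀ))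
        - Matrix.trace ((1 : M3) * (σ₂ x * (σ₂ x)ᵀ)) := by
    funext x; rw [key (σ₁ x) (σ₂ x), hfs1 x, hfs2 x]
  have hφint : Integrable (fun x => frobSq (C * σ₁ x - C⁻¹ * σ₂ x)) m := by
    rw [hφeq]
    exact ((((hdiff.add hi1).add hi2).sub hi3).sub hi4)
  have hφnn : 0 ≤ ∫ x, frobSq (C * σ₁ x - C⁻¹ * σ₂ x) ∂m :=
    integral_nonneg fun x => frobSq_nonneg _
  have hφval : ∫ x, frobSq (C * σ₁ x - C⁻¹ * σ₂ x) ∂m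
      = (∫ x, frobSq (σ₁ x - σ₂ x) ∂m) + Matrix.trace (T * S1) + Matrix.trace (T⁻¹ * S2)
        - Matrix.trace ((1 : M3) * S1) - Matrix.trace ((1 : M3) * S2) := by
    have i1 : Integrable (fun x => frobSq (σ₁ x - σ₂ x)
        + Matrix.trace (T * (σ₁ x * (σ₁ x)ᵀ))) m := hdiff.add hi1
    have i2 : Integrable (fun x => frobSq (σ₁ x - σ₂ x)
        + Matrix.trace (T * (σ₁ x * (σ₁ x)ᵀ))
        + Matrix.trace (T⁻¹ * (σ₂ x * (σ₂ x)ᵀ))) m := i1.add hi2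
    have i3 : Integrable (fun x => frobSq (σ₁ x - σ₂ x)
        + Matrix.trace (T * (σ₁ x * (σ₁ x)ᵀ))
        + Matrix.trace (T⁻¹ * (σ₂ x * (σ₂ x)ᵀ))
        - Matrix.trace ((1 : M3) * (σ₁ x * (σ₁ x)ᵀ))) m := i2.sub hi3
    rw [hφeq, integral_sub i3 hi4, integral_sub i2 hi3, integral_add i1 hi2,
      integral_add hdiff hi1, hv1, hv2, hv3, hv4]
  rw [hφval, htr1, htr2, Matrix.one_mul, Matrix.one_mul] at hφnn
  linarith
end
end

section
/- With the setting of the optimal Gaussian coupling lemma but without assuming Σ₁, Σ₂ invertible, for ε ∈ (0,1) set U_ε(Σ₁,Σ₂) = U(Σ₁+εI₃, Σ₂+εI₃). Then there is a universal constant C such that ‖Σ₁^{1/2} - Σ₂^{1/2} U_ε(Σ₁,Σ₂)‖² ≤ C√ε (1 + ‖Σ₁+Σ₂‖^{1/2}) + ∫_F ‖σ₁(x)-σ₂(x)‖² m(dx). -/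
noncomputable section
open Matrix MeasureTheory

def frobNorm (A : M3) : ℝ := Real.sqrt (frobSq A)

section
open scoped MatrixOrder

theorem Matrix.PosSemidef.sqrt_eq_cfcSqrt {M : M3} (hM : M.PosSemidef) :
    hM.sqrt = CFC.sqrt M := by
  rw [CFC.sqrt_eq_cfc, cfc_nnreal_eq_real _ M, hM.1.cfc_eq]
  simp only [IsHermitian.cfc, Unitary.conjStarAlgAut_apply, Matrix.PosSemidef.sqrt]
  congr 3
  funext i
  simp [Real.coe_sqrt, Real.coe_toNNReal', hM.eigenvalues_nonneg i]

theorem Matrix.PosSemidef.posSemidef_sqrt_s13 {M : M3} (hM : M.PosSemidef) : hM.sqrt.PosSemidef := by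
  rw [hM.sqrt_eq_cfcSqrt]; exact (CFC.sqrt_nonneg M).posSemidef

theorem Matrix.PosSemidef.sqrt_mul_self_s13 {M : M3} (hM : M.PosSemidef) : hM.sqrt * hM.sqrt = M := by
  rw [hM.sqrt_eq_cfcSqrt]; exact CFC.sqrt_mul_sqrt_self M hM.nonneg

theorem Matrix.PosSemidef.eq_sqrt_of_sq_eq {B A : M3} (hB : B.PosSemidef) (hA : A.PosSemidef)
    (h : B ^ 2 = A) : B = hA.sqrt := by
  rw [hA.sqrt_eq_cfcSqrt, eq_comm, CFC.sqrt_eq_iff A B hA.nonneg hB.nonneg, ← sq, h]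

end

namespace GCaux

attribute [local instance] Matrix.frobeniusSeminormedAddCommGroup

lemma frobSq_eq_sum (A : M3) : frobSq A = ∑ i, ∑ j, (A i j)^2 := by
  simp [frobSq, Matrix.trace, Matrix.diag, Matrix.mul_apply, sq]

lemma frobSq_nonneg (A : M3) : 0 ≤ frobSq A := by
  rw [frobSq_eq_sum]; positivity

lemma frobNorm_eq_norm (A : M3) : frobNorm A = ‖A‖ := by
  rw [Matrix.frobenius_norm_def, frobNorm, frobSq_eq_sum, Real.sqrt_eq_rpow]
  congr 1
  refine Finset.sum_congr rfl fun i _ => Finset.sum_congr rfl fun j _ => ?_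
  rw [show (2:ℝ) = ((2:ℕ):ℝ) by norm_num, Real.rpow_natCast, Real.norm_eq_abs, sq_abs]

lemma frobSq_eq_sq_norm (A : M3) : frobSq A = ‖A‖^2 := by
  rw [← frobNorm_eq_norm, frobNorm, Real.sq_sqrt (frobSq_nonneg A)]

lemma frobNorm_nonneg (A : M3) : 0 ≤ frobNorm A := Real.sqrt_nonneg _

lemma transpose_of_herm {X : M3} (h : X.IsHermitian) : Xᵀ = X := by
  ext i j
  conv_rhs => rw [← h]
  simp [Matrix.conjTranspose_apply]

lemma frobSq_sub (X Y : M3) :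
    frobSq (X - Y) = Matrix.trace (X * Xᵀ) - 2 * Matrix.trace (X * Yᵀ)
      + Matrix.trace (Y * Yᵀ) := by
  have h : Matrix.trace (Y * Xᵀ) = Matrix.trace (X * Yᵀ) := by
    rw [← Matrix.trace_transpose (X * Yᵀ), Matrix.transpose_mul, Matrix.transpose_transpose,
      Matrix.trace_mul_comm]
  simp only [frobSq, Matrix.transpose_sub, Matrix.sub_mul, Matrix.mul_sub, Matrix.trace_sub]
  rw [h]; ring

lemma frobSq_mul_orth (A U : M3) (h : U * Uᵀ = 1) : frobSq (A * U) = frobSq A := by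
  unfold frobSq
  rw [Matrix.transpose_mul, show A * U * (Uᵀ * Aᵀ) = A * (U * Uᵀ) * Aᵀ by
    simp only [Matrix.mul_assoc], h, Matrix.mul_one]

lemma psd_diag_nonneg {X : M3} (h : X.PosSemidef) (i : Fin 3) : 0 ≤ X i i := by
  have := h.dotProduct_mulVec_nonneg (Pi.single i 1)
  simpa [dotProduct, Matrix.mulVec, Pi.single_apply, Finset.sum_ite_eq] using this

lemma psd_trace_nonneg {X : M3} (h : X.PosSemidef) : 0 ≤ Matrix.trace X :=
  Finset.sum_nonneg fun i _ => psd_diag_nonneg h i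

lemma trace_le_frobNorm {X : M3} (h : X.PosSemidef) :
    Matrix.trace X ≤ Real.sqrt 3 * frobNorm X := by
  have h0 : Matrix.trace X = X 0 0 + X 1 1 + X 2 2 := by
    simp [Matrix.trace, Matrix.diag, Fin.sum_univ_three]
  have h1 : (Matrix.trace X)^2 ≤ 3 * frobSq X := by
    rw [h0, frobSq_eq_sum]
    rw [Fin.sum_univ_three]
    simp only [Fin.sum_univ_three]
    nlinarith [sq_nonneg (X 0 0 - X 1 1), sq_nonneg (X 0 0 - X 2 2), sq_nonneg (X 1 1 - X 2 2),
      sq_nonneg (X 0 1), sq_nonneg (X 0 2), sq_nonneg (X 1 0), sq_nonneg (X 1 2),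
      sq_nonneg (X 2 0), sq_nonneg (X 2 1)]
  have h2 : 0 ≤ Matrix.trace X := psd_trace_nonneg h
  calc Matrix.trace X = Real.sqrt ((Matrix.trace X)^2) := (Real.sqrt_sq h2).symm
    _ ≤ Real.sqrt (3 * frobSq X) := Real.sqrt_le_sqrt h1
    _ = Real.sqrt 3 * frobNorm X := by rw [Real.sqrt_mul (by norm_num), frobNorm]


lemma conjT (Y : M3) : Yᴴ = Yᵀ := by
  ext i j; simp [Matrix.conjTranspose_apply]

lemma posDef_of_psd_unit {M : M3} (hM : M.PosSemidef) (h : IsUnit M.det) : M.PosDef := by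
  refine Matrix.PosDef.of_dotProduct_mulVec_pos hM.1 fun x hx =>
    (hM.dotProduct_mulVec_nonneg x).lt_of_ne' fun h0 => hx ?_
  have hMx : M *ᵥ x = 0 := (hM.dotProduct_mulVec_zero_iff x).mp h0
  have hinj := (Matrix.mulVec_injective_iff_isUnit.mpr ((Matrix.isUnit_iff_isUnit_det M).mpr h))
  have : M *ᵥ x = M *ᵥ 0 := by simpa using hMx
  exact hinj this

lemma posdef_conj {B C : M3} (hB : B.PosDef) (hC : IsUnit C.det) : (Cᵀ * B * C).PosDef := by
  have hCinj := Matrix.mulVec_injective_iff_isUnit.mpr ((Matrix.isUnit_iff_isUnit_det C).mpr hC)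
  have hBh : Bᵀ = B := transpose_of_herm hB.1
  refine Matrix.PosDef.of_dotProduct_mulVec_pos ?_ fun x hx => ?_
  · show (Cᵀ * B * C)ᴴ = _
    rw [conjT, Matrix.transpose_mul, Matrix.transpose_mul, Matrix.transpose_transpose, hBh,
      Matrix.mul_assoc]
  · have hx' : C *ᵥ x ≠ 0 := by
      intro h0
      exact hx (hCinj (by simpa using h0))
    have key : star x ⬝ᵥ ((Cᵀ * B * C) *ᵥ x) = star (C *ᵥ x) ⬝ᵥ (B *ᵥ (C *ᵥ x)) := by
      have hsx : star x = x := by simp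
      have hscx : star (C *ᵥ x) = C *ᵥ x := by simp
      rw [hsx, hscx, Matrix.mul_assoc, ← Matrix.mulVec_mulVec,
        Matrix.dotProduct_mulVec, Matrix.vecMul_transpose, ← Matrix.mulVec_mulVec,
        Matrix.dotProduct_mulVec]
    rw [key]
    exact hB.dotProduct_mulVec_pos hx'


lemma sqrt_isUnit_det {M : M3} (hM : M.PosSemidef) (h : M.PosDef) : IsUnit hM.sqrt.det := by
  have h1 : hM.sqrt.det * hM.sqrt.det = M.det := by
    rw [← Matrix.det_mul, hM.sqrt_mul_self_s13]
  have h2 : M.det ≠ 0 := ne_of_gt h.det_pos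
  have : hM.sqrt.det ≠ 0 := fun h0 => h2 (by rw [← h1, h0, mul_zero])
  exact this.isUnit

lemma sqrt_posDef {M : M3} (hM : M.PosSemidef) (h : M.PosDef) : hM.sqrt.PosDef :=
  posDef_of_psd_unit hM.posSemidef_sqrt_s13 (sqrt_isUnit_det hM h)

lemma sqrt_transpose {M : M3} (hM : M.PosSemidef) : hM.sqrtᵀ = hM.sqrt :=
  transpose_of_herm hM.posSemidef_sqrt_s13.1

/-- The pointwise trace inequality: `2 tr(X Yᵀ) ≤ tr(R² X Xᵀ) + tr(R⁻² Y Yᵀ)`. -/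
lemma pointwise_ineq (R X Y : M3) (hR : IsUnit R.det) (hRs : Rᵀ = R) :
    2 * Matrix.trace (X * Yᵀ) ≤
      Matrix.trace ((R * R) * (X * Xᵀ)) + Matrix.trace ((R⁻¹ * R⁻¹) * (Y * Yᵀ)) := by
  have hRi : (R⁻¹)ᵀ = R⁻¹ := by rw [Matrix.transpose_nonsing_inv, hRs]
  have h0 : 0 ≤ frobSq (R * X - R⁻¹ * Y) := frobSq_nonneg _
  rw [frobSq_sub] at h0
  have e1 : Matrix.trace ((R * X) * (R * X)ᵀ) = Matrix.trace ((R * R) * (X * Xᵀ)) := by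
    rw [Matrix.transpose_mul, hRs, show R * X * (Xᵀ * R) = (R * (X * Xᵀ)) * R by
      simp only [Matrix.mul_assoc], Matrix.trace_mul_comm, ← Matrix.mul_assoc]
  have e2 : Matrix.trace ((R * X) * (R⁻¹ * Y)ᵀ) = Matrix.trace (X * Yᵀ) := by
    rw [Matrix.transpose_mul, hRi, show R * X * (Yᵀ * R⁻¹) = R * (X * Yᵀ * R⁻¹) by
      simp only [Matrix.mul_assoc], Matrix.trace_mul_comm R, Matrix.mul_assoc,
      Matrix.nonsing_inv_mul R hR, Matrix.mul_one]
  have e3 : Matrix.trace ((R⁻¹ * Y) * (R⁻¹ * Y)ᵀ) = Matrix.trace ((R⁻¹ * R⁻¹) * (Y * Yᵀ)) := by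
    rw [Matrix.transpose_mul, hRi, show R⁻¹ * Y * (Yᵀ * R⁻¹) = (R⁻¹ * (Y * Yᵀ)) * R⁻¹ by
      simp only [Matrix.mul_assoc], Matrix.trace_mul_comm, ← Matrix.mul_assoc]
  rw [e1, e2, e3] at h0
  linarith


/-- Perturbation bound for matrix square roots via spectral calculus:
`‖√(S+εI) - √S‖_F² ≤ 3ε`. -/
lemma sqrt_perturb {S : M3} (hS : S.PosSemidef) {ε : ℝ} (hε : 0 < ε)
    (hA : (S + ε • (1:M3)).PosDef) :
    frobSq (hA.posSemidef.sqrt - hS.sqrt) ≤ 3 * ε := by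
  classical
  have h := hS.1
  set U : M3 := (h.eigenvectorUnitary : M3) with hU
  have hUU : U * star U = 1 := Matrix.mem_unitaryGroup_iff.mp h.eigenvectorUnitary.2
  have hUU' : star U * U = 1 := Matrix.mem_unitaryGroup_iff'.mp h.eigenvectorUnitary.2
  set lam := h.eigenvalues with hlam
  have hlam0 : ∀ i, 0 ≤ lam i := fun i => hS.eigenvalues_nonneg i
  set D : (ℝ → ℝ) → M3 := fun f => U * Matrix.diagonal (f ∘ lam) * star U with hD
  have hmul : ∀ f g : ℝ → ℝ, D f * D g = D (fun t => f t * g t) := by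
    intro f g
    show U * Matrix.diagonal (f ∘ lam) * star U * (U * Matrix.diagonal (g ∘ lam) * star U) = _
    have e : U * Matrix.diagonal (f ∘ lam) * star U * (U * Matrix.diagonal (g ∘ lam) * star U)
        = U * (Matrix.diagonal (f ∘ lam) * (star U * U) * Matrix.diagonal (g ∘ lam)) * star U := by
      simp only [Matrix.mul_assoc]
    rw [e, hUU', Matrix.mul_one, Matrix.diagonal_mul_diagonal]
    rfl
  have hDpsd : ∀ f : ℝ → ℝ, (∀ i, 0 ≤ f (lam i)) → (D f).PosSemidef := by
    intro f hf
    have hdg : (Matrix.diagonal (f ∘ lam)).PosSemidef :=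
      Matrix.posSemidef_diagonal_iff.mpr fun i => hf i
    have h2 := hdg.mul_mul_conjTranspose_same U
    rwa [← Matrix.star_eq_conjTranspose] at h2
  have hid : D (fun t => t) = S := by
    have hst := h.spectral_theorem
    rw [RCLike.ofReal_real_eq_id, Function.id_comp] at hst
    exact hst.symm
  have hshift : D (fun t => t + ε) = S + ε • (1:M3) := by
    have hdiag : Matrix.diagonal ((fun t => t + ε) ∘ lam)
        = Matrix.diagonal lam + ε • (1:M3) := by
      ext i j
      by_cases hij : i = j <;> simp [Matrix.diagonal, hij, Matrix.one_apply]
    show U * _ * star U = _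
    rw [hdiag, Matrix.mul_add, Matrix.add_mul]
    have h1 : U * Matrix.diagonal lam * star U = S := by
      have h1' := hid
      simpa [hD, Function.comp_def] using h1'
    have h2 : U * (ε • (1:M3)) * star U = ε • (1:M3) := by
      rw [Matrix.mul_smul, Matrix.mul_one, Matrix.smul_mul, hUU]
    rw [h1, h2]
  have hVpsd : (D Real.sqrt).PosSemidef := hDpsd _ fun i => Real.sqrt_nonneg _
  have hWpsd : (D (fun t => Real.sqrt (t + ε))).PosSemidef :=
    hDpsd _ fun i => Real.sqrt_nonneg _
  have hVeq : D Real.sqrt = hS.sqrt := by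
    refine hVpsd.eq_sqrt_of_sq_eq hS ?_
    rw [pow_two, hmul]
    have e : (fun t => Real.sqrt t * Real.sqrt t) ∘ lam = (fun t : ℝ => t) ∘ lam :=
      funext fun i => Real.mul_self_sqrt (hlam0 i)
    show U * Matrix.diagonal ((fun t => Real.sqrt t * Real.sqrt t) ∘ lam) * star U = S
    rw [e]
    exact hid
  have hWeq : D (fun t => Real.sqrt (t + ε)) = hA.posSemidef.sqrt := by
    refine hWpsd.eq_sqrt_of_sq_eq hA.posSemidef ?_
    rw [pow_two, hmul]
    have e : (fun t => Real.sqrt (t + ε) * Real.sqrt (t + ε)) ∘ lam = (fun t : ℝ => t + ε) ∘ lam :=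
      funext fun i => Real.mul_self_sqrt (by linarith [hlam0 i])
    show U * Matrix.diagonal ((fun t => Real.sqrt (t+ε) * Real.sqrt (t+ε)) ∘ lam) * star U = _
    rw [e]
    exact hshift
  set g : ℝ → ℝ := fun t => Real.sqrt (t + ε) - Real.sqrt t with hg
  have hdiff : hA.posSemidef.sqrt - hS.sqrt = D g := by
    rw [← hVeq, ← hWeq]
    show _ = U * Matrix.diagonal (g ∘ lam) * star U
    have e : Matrix.diagonal (g ∘ lam) = Matrix.diagonal ((fun t => Real.sqrt (t+ε)) ∘ lam)
        - Matrix.diagonal (Real.sqrt ∘ lam) := by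
      rw [Matrix.diagonal_sub]
      rfl
    rw [e, Matrix.mul_sub, Matrix.sub_mul]
  have hsym : (D g)ᵀ = D g := by
    refine transpose_of_herm ?_
    show (U * Matrix.diagonal (g ∘ lam) * star U)ᴴ = _
    have e1 : (star U)ᴴ = U := by rw [← Matrix.star_eq_conjTranspose, star_star]
    have e2 : (Matrix.diagonal (g ∘ lam))ᴴ = Matrix.diagonal (g ∘ lam) := by
      ext i j
      by_cases hij : i = j <;>
        simp [Matrix.conjTranspose_apply, Matrix.diagonal_apply, hij, eq_comm]
    have e3 : Uᴴ = star U := (Matrix.star_eq_conjTranspose U).symm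
    rw [Matrix.conjTranspose_mul, Matrix.conjTranspose_mul, e1, e2, e3, ← Matrix.mul_assoc]
  have hfrob : frobSq (D g) = ∑ i, (g (lam i))^2 := by
    unfold frobSq
    rw [hsym, hmul]
    show Matrix.trace (U * Matrix.diagonal ((fun t => g t * g t) ∘ lam) * star U) = _
    rw [Matrix.trace_mul_comm, ← Matrix.mul_assoc, hUU', Matrix.one_mul,
      Matrix.trace_diagonal]
    simp [Function.comp, sq]
  rw [hdiff, hfrob]
  have hb : ∀ i, (g (lam i))^2 ≤ ε := by
    intro i
    have h1 : 0 ≤ lam i := hlam0 i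
    have ha := Real.sqrt_nonneg (lam i)
    have hb2 := Real.sq_sqrt (show (0:ℝ) ≤ lam i + ε by linarith)
    have ha2 := Real.sq_sqrt h1
    have hmono : Real.sqrt (lam i) ≤ Real.sqrt (lam i + ε) := Real.sqrt_le_sqrt (by linarith)
    simp only [hg]
    nlinarith [Real.sqrt_nonneg (lam i + ε)]
  rw [Fin.sum_univ_three]
  linarith [hb 0, hb 1, hb 2]


lemma frobSq_sub_le (X Y : M3) :
    frobSq (X - Y) ≤ 2 * (Matrix.trace (X * Xᵀ) + Matrix.trace (Y * Yᵀ)) := by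
  have h1 := frobSq_nonneg (X - (-Y))
  have h2 := frobSq_sub X (-Y)
  have h3 := frobSq_sub X Y
  simp only [Matrix.transpose_neg, Matrix.mul_neg, Matrix.neg_mul, neg_neg,
    Matrix.trace_neg] at h2
  rw [h2] at h1
  linarith

lemma sqrt_add_le (x y : ℝ) (hx : 0 ≤ x) (hy : 0 ≤ y) :
    Real.sqrt (x + y) ≤ Real.sqrt x + Real.sqrt y := by
  have h1 := Real.sq_sqrt hx
  have h2 := Real.sq_sqrt hy
  have h3 := Real.sqrt_nonneg x
  have h4 := Real.sqrt_nonneg y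
  have h5 : x + y ≤ (Real.sqrt x + Real.sqrt y)^2 := by nlinarith [mul_nonneg h3 h4]
  calc Real.sqrt (x + y) ≤ Real.sqrt ((Real.sqrt x + Real.sqrt y)^2) := Real.sqrt_le_sqrt h5
    _ = Real.sqrt x + Real.sqrt y := Real.sqrt_sq (by linarith)

lemma final_numeric {ε I N : ℝ} (hε0 : 0 < ε) (hε1 : ε < 1) (hI : 0 ≤ I) (hN : 0 ≤ N)
    (hIN : I ≤ 2 * Real.sqrt 3 * N) :
    (2 * Real.sqrt (3*ε) + Real.sqrt (I + 6*ε))^2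
      ≤ 100 * Real.sqrt ε * (1 + Real.sqrt N) + I := by
  set a := Real.sqrt ε with ha
  set b := Real.sqrt I with hb
  set s := Real.sqrt N with hs
  have ha2 : a^2 = ε := Real.sq_sqrt hε0.le
  have ha0 : 0 < a := Real.sqrt_pos.mpr hε0
  have ha1 : a ≤ 1 := by nlinarith
  have hb2 : b^2 = I := Real.sq_sqrt hI
  have hb0 : 0 ≤ b := Real.sqrt_nonneg _
  have hs0 : 0 ≤ s := Real.sqrt_nonneg _
  have hs2 : s^2 = N := Real.sq_sqrt hN
  have h3 : Real.sqrt 3 ≤ 2 := by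
    nlinarith [Real.sq_sqrt (show (0:ℝ) ≤ 3 by norm_num), Real.sqrt_nonneg 3]
  have h30 : 0 ≤ Real.sqrt 3 := Real.sqrt_nonneg 3
  have h6 : Real.sqrt 6 ≤ 5/2 := by
    nlinarith [Real.sq_sqrt (show (0:ℝ) ≤ 6 by norm_num), Real.sqrt_nonneg 6]
  have h60 : 0 ≤ Real.sqrt 6 := Real.sqrt_nonneg 6
  have hbs : b ≤ 2 * s := by nlinarith
  have e1 : Real.sqrt (3*ε) = Real.sqrt 3 * a := Real.sqrt_mul (by norm_num) ε
  have e2 : Real.sqrt (6*ε) = Real.sqrt 6 * a := Real.sqrt_mul (by norm_num) ε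
  have e3 : Real.sqrt (I + 6*ε) ≤ b + Real.sqrt 6 * a := by
    calc Real.sqrt (I + 6*ε) ≤ Real.sqrt I + Real.sqrt (6*ε) :=
          sqrt_add_le _ _ hI (by linarith)
      _ = b + Real.sqrt 6 * a := by rw [e2]
  have hL0 : 0 ≤ 2 * Real.sqrt (3*ε) + Real.sqrt (I + 6*ε) := by
    have := Real.sqrt_nonneg (3*ε); have := Real.sqrt_nonneg (I + 6*ε); linarith
  have step : (2 * Real.sqrt (3*ε) + Real.sqrt (I + 6*ε))^2
      ≤ (2 * Real.sqrt 3 * a + (b + Real.sqrt 6 * a))^2 := by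
    apply pow_le_pow_left₀ hL0
    rw [e1]; linarith
  refine step.trans ?_
  nlinarith [mul_nonneg ha0.le hb0, mul_nonneg ha0.le hs0, mul_nonneg h30 h60,
    mul_nonneg (mul_nonneg ha0.le ha0.le) h30, mul_nonneg (mul_nonneg ha0.le ha0.le) h60,
    sq_nonneg (Real.sqrt 3 - Real.sqrt 6), mul_le_mul hbs (le_refl a) ha0.le (by linarith),
    mul_nonneg hs0 ha0.le]

/-- Integration of `x ↦ tr (W * g x)` entrywise. -/
lemma int_tr {F : Type} [MeasurableSpace F] (m : Measure F)
    (W : M3) (g : F → M3) (hg : ∀ i j, Integrable (fun x => g x i j) m) :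
    Integrable (fun x => Matrix.trace (W * g x)) m ∧
    ∫ x, Matrix.trace (W * g x) ∂m
      = Matrix.trace (W * Matrix.of (fun i j => ∫ x, g x i j ∂m)) := by
  have hrep : ∀ (M : M3), Matrix.trace (W * M) = ∑ i, ∑ j, W i j * M j i := by
    intro M; simp [Matrix.trace, Matrix.diag, Matrix.mul_apply]
  have hfun : (fun x => Matrix.trace (W * g x)) = fun x => ∑ i, ∑ j, W i j * g x j i :=
    funext fun x => hrep _
  have hint : ∀ (i j : Fin 3), Integrable (fun x => W i j * g x j i) m :=
    fun i j => (hg j i).const_mul _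
  constructor
  · rw [hfun]
    exact integrable_finset_sum _ fun i _ => integrable_finset_sum _ fun j _ => hint i j
  · rw [hfun, hrep]
    rw [integral_finset_sum _ fun i _ => integrable_finset_sum _ fun j _ => hint i j]
    refine Finset.sum_congr rfl fun i _ => ?_
    rw [integral_finset_sum _ fun j _ => hint i j]
    refine Finset.sum_congr rfl fun j _ => ?_
    rw [integral_const_mul]
    rfl


/-- Deterministic part: orthogonality of `U`, the Bures trace identity, and the
dual witness `R` for the trace inequality. -/
lemma det_part (A B A2 B2 Q U : M3)
    (hA2d : A2.PosDef) (hB2d : B2.PosDef) (hQd : Q.PosDef)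
    (hA2s : A2ᵀ = A2) (hB2s : B2ᵀ = B2) (hQs : Qᵀ = Q)
    (hA2m : A2 * A2 = A) (hB2m : B2 * B2 = B) (hQm : Q * Q = A2 * B * A2)
    (hU : U = B2⁻¹ * A2⁻¹ * Q) :
    U * Uᵀ = 1 ∧
    frobSq (A2 - B2 * U) = Matrix.trace A + Matrix.trace B - 2 * Matrix.trace Q ∧
    ∃ R : M3, Rᵀ = R ∧ IsUnit R.det ∧
      (R * R).PosSemidef ∧ (R⁻¹ * R⁻¹).PosSemidef ∧
      Matrix.trace ((R * R) * A) = Matrix.trace Q ∧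
      Matrix.trace ((R⁻¹ * R⁻¹) * B) = Matrix.trace Q := by
  have hA2u : IsUnit A2.det := (Matrix.isUnit_iff_isUnit_det _).mp hA2d.isUnit
  have hB2u : IsUnit B2.det := (Matrix.isUnit_iff_isUnit_det _).mp hB2d.isUnit
  have hQu : IsUnit Q.det := (Matrix.isUnit_iff_isUnit_det _).mp hQd.isUnit
  have cA1 : ∀ X : M3, A2⁻¹ * (A2 * X) = X := fun X => by
    rw [← Matrix.mul_assoc, Matrix.nonsing_inv_mul _ hA2u, Matrix.one_mul]
  have cA2 : ∀ X : M3, A2 * (A2⁻¹ * X) = X := fun X => by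
    rw [← Matrix.mul_assoc, Matrix.mul_nonsing_inv _ hA2u, Matrix.one_mul]
  have hQm' : ∀ X : M3, Q * (Q * X) = A2 * (B * (A2 * X)) := fun X => by
    rw [← Matrix.mul_assoc, hQm]; simp only [Matrix.mul_assoc]
  have hUt : Uᵀ = Q * (A2⁻¹ * B2⁻¹) := by
    rw [hU, Matrix.transpose_mul, Matrix.transpose_mul, hQs,
      Matrix.transpose_nonsing_inv, Matrix.transpose_nonsing_inv, hA2s, hB2s]
  have orth : U * Uᵀ = 1 := by
    rw [hUt, hU]
    simp only [Matrix.mul_assoc]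
    rw [hQm', cA1, cA2, ← hB2m]
    simp only [Matrix.mul_assoc]
    rw [Matrix.mul_nonsing_inv _ hB2u, Matrix.mul_one, Matrix.nonsing_inv_mul _ hB2u]
  refine ⟨orth, ?_, ?_⟩
  · -- trace identity
    have hBU : B2 * U = A2⁻¹ * Q := by
      rw [hU]
      simp only [← Matrix.mul_assoc]
      rw [Matrix.mul_nonsing_inv _ hB2u, Matrix.one_mul]
    rw [hBU, frobSq_sub]
    have t1 : Matrix.trace (A2 * A2ᵀ) = Matrix.trace A := by rw [hA2s, hA2m]
    have t2 : Matrix.trace (A2 * (A2⁻¹ * Q)ᵀ) = Matrix.trace Q := by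
      rw [Matrix.transpose_mul, hQs, Matrix.transpose_nonsing_inv, hA2s,
        Matrix.trace_mul_comm, Matrix.mul_assoc, Matrix.nonsing_inv_mul _ hA2u,
        Matrix.mul_one]
    have t3 : Matrix.trace ((A2⁻¹ * Q) * (A2⁻¹ * Q)ᵀ) = Matrix.trace B := by
      rw [Matrix.transpose_mul, hQs, Matrix.transpose_nonsing_inv, hA2s]
      have e : A2⁻¹ * Q * (Q * A2⁻¹) = B := by
        simp only [Matrix.mul_assoc]
        rw [hQm', cA1, Matrix.mul_nonsing_inv _ hA2u, Matrix.mul_one]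
      rw [e]
    rw [t1, t2, t3]
    ring
  · -- the dual witness R
    have hA2is : (A2⁻¹)ᵀ = A2⁻¹ := by rw [Matrix.transpose_nonsing_inv, hA2s]
    have hA2iu : IsUnit (A2⁻¹).det := (Matrix.isUnit_iff_isUnit_det _).mp hA2d.inv.isUnit
    have hTd : (A2⁻¹ * Q * A2⁻¹).PosDef := by
      have h := posdef_conj hQd hA2iu
      rwa [hA2is] at h
    refine ⟨hTd.posSemidef.sqrt, sqrt_transpose _, sqrt_isUnit_det _ hTd, ?_, ?_, ?_, ?_⟩
    case _ =>
      rw [hTd.posSemidef.sqrt_mul_self_s13]; exact hTd.posSemidef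
    case _ =>
      rw [← Matrix.mul_inv_rev, hTd.posSemidef.sqrt_mul_self_s13]
      exact hTd.inv.posSemidef
    case _ =>
      rw [hTd.posSemidef.sqrt_mul_self_s13, ← hA2m]
      -- trace (A2⁻¹ * Q * A2⁻¹ * (A2 * A2)) = trace Q
      simp only [Matrix.mul_assoc]
      rw [cA1, Matrix.trace_mul_comm, Matrix.mul_assoc,
        Matrix.mul_nonsing_inv _ hA2u, Matrix.mul_one]
    case _ =>
      rw [← Matrix.mul_inv_rev, hTd.posSemidef.sqrt_mul_self_s13]
      have hTinv : (A2⁻¹ * Q * A2⁻¹)⁻¹ = A2 * Q⁻¹ * A2 := by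
        apply Matrix.inv_eq_right_inv
        simp only [Matrix.mul_assoc]
        rw [cA1]
        rw [show Q * (Q⁻¹ * A2) = A2 by
            rw [← Matrix.mul_assoc, Matrix.mul_nonsing_inv _ hQu, Matrix.one_mul],
          Matrix.nonsing_inv_mul _ hA2u]
      rw [hTinv, Matrix.trace_mul_comm]
      simp only [← Matrix.mul_assoc]
      rw [Matrix.trace_mul_comm]
      simp only [← Matrix.mul_assoc]
      rw [← hQm, Matrix.mul_assoc, Matrix.mul_nonsing_inv _ hQu, Matrix.mul_one]

end GCaux

attribute [local instance] Matrix.frobeniusSeminormedAddCommGroup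

theorem gaussian_coupling_regularized :
    ∃ C : ℝ, 0 < C ∧
    ∀ {F : Type} [MeasurableSpace F] (m : Measure F), IsProbabilityMeasure m →
    ∀ (σ₁ σ₂ : F → M3),
      (∀ i j, Integrable (fun x => (σ₁ x * (σ₁ x)ᵀ) i j) m) →
      (∀ i j, Integrable (fun x => (σ₂ x * (σ₂ x)ᵀ) i j) m) →
      Integrable (fun x => frobSq (σ₁ x - σ₂ x)) m →
    ∀ (S1 S2 : M3),
      S1 = Matrix.of (fun i j => ∫ x, (σ₁ x * (σ₁ x)ᵀ) i j ∂m) →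
      S2 = Matrix.of (fun i j => ∫ x, (σ₂ x * (σ₂ x)ᵀ) i j ∂m) →
    ∀ (hS1 : S1.PosSemidef) (hS2 : S2.PosSemidef)
      (ε : ℝ), ε ∈ Set.Ioo (0:ℝ) 1 →
    ∀ (hA : (S1 + ε • (1 : M3)).PosDef) (hB : (S2 + ε • (1 : M3)).PosDef)
      (hP : (hA.posSemidef.sqrt * (S2 + ε • (1 : M3)) * hA.posSemidef.sqrt).PosSemidef)
      (Uε : M3),
      Uε = (hB.posSemidef.sqrt)⁻¹ * (hA.posSemidef.sqrt)⁻¹ * hP.sqrt →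
      frobSq (hS1.sqrt - hS2.sqrt * Uε)
        ≤ C * Real.sqrt ε * (1 + Real.sqrt (frobNorm (S1 + S2)))
          + ∫ x, frobSq (σ₁ x - σ₂ x) ∂m := by
  classical
  refine ⟨100, by norm_num, ?_⟩
  intro F _ m hm σ₁ σ₂ hσ₁ hσ₂ hdiffInt S1 S2 hS1e hS2e hS1 hS2 ε hε hA hB hP Uε hUε
  obtain ⟨hε0, hε1⟩ := hε
  have hPd : (hA.posSemidef.sqrt * (S2 + ε • (1:M3)) * hA.posSemidef.sqrt).PosDef := by
    have h := GCaux.posdef_conj hB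
      ((Matrix.isUnit_iff_isUnit_det _).mp (GCaux.sqrt_posDef hA.posSemidef hA).isUnit)
    rwa [GCaux.sqrt_transpose hA.posSemidef] at h
  obtain ⟨orth, hE, R, hRs, hRu, hRRpsd, hRiipsd, htrA, htrB⟩ :=
    GCaux.det_part (S1 + ε • (1:M3)) (S2 + ε • (1:M3)) hA.posSemidef.sqrt
      hB.posSemidef.sqrt hP.sqrt Uε
      (GCaux.sqrt_posDef hA.posSemidef hA) (GCaux.sqrt_posDef hB.posSemidef hB)
      (GCaux.sqrt_posDef hP hPd)
      (GCaux.sqrt_transpose hA.posSemidef) (GCaux.sqrt_transpose hB.posSemidef)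
      (GCaux.sqrt_transpose hP)
      hA.posSemidef.sqrt_mul_self_s13 hB.posSemidef.sqrt_mul_self_s13 hP.sqrt_mul_self_s13 hUε
  -- integration facts
  have I1 := GCaux.int_tr m (1:M3) (fun x => σ₁ x * (σ₁ x)ᵀ) hσ₁
  have I2 := GCaux.int_tr m (1:M3) (fun x => σ₂ x * (σ₂ x)ᵀ) hσ₂
  have IR1 := GCaux.int_tr m (R*R) (fun x => σ₁ x * (σ₁ x)ᵀ) hσ₁
  have IR2 := GCaux.int_tr m (R⁻¹*R⁻¹) (fun x => σ₂ x * (σ₂ x)ᵀ) hσ₂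
  have h1int : Integrable (fun x => Matrix.trace (σ₁ x * (σ₁ x)ᵀ)) m := by
    have h := I1.1; simp only [Matrix.one_mul] at h; exact h
  have h2int : Integrable (fun x => Matrix.trace (σ₂ x * (σ₂ x)ᵀ)) m := by
    have h := I2.1; simp only [Matrix.one_mul] at h; exact h
  have h1eq : ∫ x, Matrix.trace (σ₁ x * (σ₁ x)ᵀ) ∂m = Matrix.trace S1 := by
    have h := I1.2; simp only [Matrix.one_mul] at h; rw [hS1e]; exact h
  have h2eq : ∫ x, Matrix.trace (σ₂ x * (σ₂ x)ᵀ) ∂m = Matrix.trace S2 := by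
    have h := I2.2; simp only [Matrix.one_mul] at h; rw [hS2e]; exact h
  have IR1i : Integrable (fun x => Matrix.trace ((R*R) * (σ₁ x * (σ₁ x)ᵀ))) m := IR1.1
  have IR2i : Integrable (fun x => Matrix.trace ((R⁻¹*R⁻¹) * (σ₂ x * (σ₂ x)ᵀ))) m := IR2.1
  have IR1e : ∫ x, Matrix.trace ((R*R) * (σ₁ x * (σ₁ x)ᵀ)) ∂m
      = Matrix.trace ((R*R) * S1) := by rw [hS1e]; exact IR1.2
  have IR2e : ∫ x, Matrix.trace ((R⁻¹*R⁻¹) * (σ₂ x * (σ₂ x)ᵀ)) ∂m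
      = Matrix.trace ((R⁻¹*R⁻¹) * S2) := by rw [hS2e]; exact IR2.2
  -- the cross term
  have hceq : ∀ x, Matrix.trace (σ₁ x * (σ₂ x)ᵀ)
      = (Matrix.trace (σ₁ x * (σ₁ x)ᵀ) + Matrix.trace (σ₂ x * (σ₂ x)ᵀ)
          - frobSq (σ₁ x - σ₂ x)) / 2 := by
    intro x; rw [GCaux.frobSq_sub]; ring
  have hcint : Integrable (fun x => Matrix.trace (σ₁ x * (σ₂ x)ᵀ)) m := by
    have e : (fun x => Matrix.trace (σ₁ x * (σ₂ x)ᵀ))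
        = fun x => (Matrix.trace (σ₁ x * (σ₁ x)ᵀ) + Matrix.trace (σ₂ x * (σ₂ x)ᵀ)
          - frobSq (σ₁ x - σ₂ x)) / 2 := funext hceq
    rw [e]
    exact ((h1int.add h2int).sub hdiffInt).div_const 2
  have hc2 : Integrable (fun x => 2 * Matrix.trace (σ₁ x * (σ₂ x)ᵀ)) m := hcint.const_mul 2
  have hIeq : ∫ x, frobSq (σ₁ x - σ₂ x) ∂m
      = Matrix.trace S1 + Matrix.trace S2
        - 2 * ∫ x, Matrix.trace (σ₁ x * (σ₂ x)ᵀ) ∂m := by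
    have hfs : (fun x => frobSq (σ₁ x - σ₂ x)) = fun x =>
        Matrix.trace (σ₁ x * (σ₁ x)ᵀ) - 2 * Matrix.trace (σ₁ x * (σ₂ x)ᵀ)
          + Matrix.trace (σ₂ x * (σ₂ x)ᵀ) := funext fun x => GCaux.frobSq_sub _ _
    have hf1 : Integrable (fun x => Matrix.trace (σ₁ x * (σ₁ x)ᵀ)
        - 2 * Matrix.trace (σ₁ x * (σ₂ x)ᵀ)) m := h1int.sub hc2
    rw [hfs, integral_add hf1 h2int, integral_sub h1int hc2, integral_const_mul, h1eq, h2eq]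
    ring
  -- the key trace inequality
  have hkey : (∫ x, Matrix.trace (σ₁ x * (σ₂ x)ᵀ) ∂m) ≤ Matrix.trace hP.sqrt := by
    have hpt : ∀ x, 2 * Matrix.trace (σ₁ x * (σ₂ x)ᵀ)
        ≤ Matrix.trace ((R*R) * (σ₁ x * (σ₁ x)ᵀ))
          + Matrix.trace ((R⁻¹*R⁻¹) * (σ₂ x * (σ₂ x)ᵀ)) :=
      fun x => GCaux.pointwise_ineq R _ _ hRu hRs
    have hsum : Integrable (fun x => Matrix.trace ((R*R) * (σ₁ x * (σ₁ x)ᵀ))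
        + Matrix.trace ((R⁻¹*R⁻¹) * (σ₂ x * (σ₂ x)ᵀ))) m := IR1i.add IR2i
    have hmono := integral_mono (μ := m) hc2 hsum (fun x => hpt x)
    rw [integral_const_mul, integral_add IR1i IR2i, IR1e, IR2e] at hmono
    have m1 : Matrix.trace ((R*R) * S1) ≤ Matrix.trace ((R*R) * (S1 + ε • (1:M3))) := by
      rw [Matrix.mul_add, Matrix.trace_add]
      have h0 : 0 ≤ Matrix.trace ((R*R) * (ε • (1:M3))) := by
        rw [Matrix.mul_smul, Matrix.mul_one, Matrix.trace_smul, smul_eq_mul]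
        exact mul_nonneg hε0.le (GCaux.psd_trace_nonneg hRRpsd)
      linarith
    have m2 : Matrix.trace ((R⁻¹*R⁻¹) * S2)
        ≤ Matrix.trace ((R⁻¹*R⁻¹) * (S2 + ε • (1:M3))) := by
      rw [Matrix.mul_add, Matrix.trace_add]
      have h0 : 0 ≤ Matrix.trace ((R⁻¹*R⁻¹) * (ε • (1:M3))) := by
        rw [Matrix.mul_smul, Matrix.mul_one, Matrix.trace_smul, smul_eq_mul]
        exact mul_nonneg hε0.le (GCaux.psd_trace_nonneg hRiipsd)
      linarith
    linarith
  -- abbreviations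
  have hI0 : 0 ≤ ∫ x, frobSq (σ₁ x - σ₂ x) ∂m :=
    integral_nonneg fun x => GCaux.frobSq_nonneg _
  have hN0 : 0 ≤ frobNorm (S1 + S2) := GCaux.frobNorm_nonneg _
  have hIN : (∫ x, frobSq (σ₁ x - σ₂ x) ∂m) ≤ 2 * Real.sqrt 3 * frobNorm (S1 + S2) := by
    have hptl : ∀ x, frobSq (σ₁ x - σ₂ x)
        ≤ 2 * (Matrix.trace (σ₁ x * (σ₁ x)ᵀ) + Matrix.trace (σ₂ x * (σ₂ x)ᵀ)) :=
      fun x => GCaux.frobSq_sub_le _ _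
    have hsum2 : Integrable (fun x => 2 * (Matrix.trace (σ₁ x * (σ₁ x)ᵀ)
        + Matrix.trace (σ₂ x * (σ₂ x)ᵀ))) m := (h1int.add h2int).const_mul 2
    have hmono := integral_mono (μ := m) hdiffInt hsum2 (fun x => hptl x)
    rw [integral_const_mul, integral_add h1int h2int, h1eq, h2eq] at hmono
    have hle := GCaux.trace_le_frobNorm (hS1.add hS2)
    rw [Matrix.trace_add] at hle
    linarith
  -- bound on the regularized coupling error
  have hEb : frobSq (hA.posSemidef.sqrt - hB.posSemidef.sqrt * Uε)
      ≤ (∫ x, frobSq (σ₁ x - σ₂ x) ∂m) + 6 * ε := by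
    rw [hE]
    have htA : Matrix.trace (S1 + ε • (1:M3)) = Matrix.trace S1 + 3 * ε := by
      rw [Matrix.trace_add, Matrix.trace_smul, Matrix.trace_one, smul_eq_mul]
      norm_num
      ring
    have htB : Matrix.trace (S2 + ε • (1:M3)) = Matrix.trace S2 + 3 * ε := by
      rw [Matrix.trace_add, Matrix.trace_smul, Matrix.trace_one, smul_eq_mul]
      norm_num
      ring
    rw [htA, htB, hIeq]
    linarith
  -- perturbation bounds
  have e1 : frobSq (hA.posSemidef.sqrt - hS1.sqrt) ≤ 3 * ε := GCaux.sqrt_perturb hS1 hε0 hA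
  have e2 : frobSq (hB.posSemidef.sqrt - hS2.sqrt) ≤ 3 * ε := GCaux.sqrt_perturb hS2 hε0 hB
  -- split and use the triangle inequality for the Frobenius norm
  have hsplit : hS1.sqrt - hS2.sqrt * Uε
      = -(hA.posSemidef.sqrt - hS1.sqrt) + (hA.posSemidef.sqrt - hB.posSemidef.sqrt * Uε)
        + (hB.posSemidef.sqrt - hS2.sqrt) * Uε := by
    rw [Matrix.sub_mul]; abel
  have nb1 : ‖-(hA.posSemidef.sqrt - hS1.sqrt)‖ ≤ Real.sqrt (3*ε) := by
    rw [norm_neg, ← GCaux.frobNorm_eq_norm]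
    unfold frobNorm
    exact Real.sqrt_le_sqrt e1
  have nb2 : ‖hA.posSemidef.sqrt - hB.posSemidef.sqrt * Uε‖
      ≤ Real.sqrt ((∫ x, frobSq (σ₁ x - σ₂ x) ∂m) + 6*ε) := by
    rw [← GCaux.frobNorm_eq_norm]
    unfold frobNorm
    exact Real.sqrt_le_sqrt hEb
  have nb3 : ‖(hB.posSemidef.sqrt - hS2.sqrt) * Uε‖ ≤ Real.sqrt (3*ε) := by
    rw [← GCaux.frobNorm_eq_norm]
    unfold frobNorm
    rw [GCaux.frobSq_mul_orth _ _ orth]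
    exact Real.sqrt_le_sqrt e2
  have htri : ‖hS1.sqrt - hS2.sqrt * Uε‖
      ≤ 2 * Real.sqrt (3*ε) + Real.sqrt ((∫ x, frobSq (σ₁ x - σ₂ x) ∂m) + 6*ε) := by
    rw [hsplit]
    have t := norm_add_le (-(hA.posSemidef.sqrt - hS1.sqrt)
      + (hA.posSemidef.sqrt - hB.posSemidef.sqrt * Uε))
      ((hB.posSemidef.sqrt - hS2.sqrt) * Uε)
    have t2 := norm_add_le (-(hA.posSemidef.sqrt - hS1.sqrt))
      (hA.posSemidef.sqrt - hB.posSemidef.sqrt * Uε)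
    linarith
  have hfin : frobSq (hS1.sqrt - hS2.sqrt * Uε)
      ≤ (2 * Real.sqrt (3*ε) + Real.sqrt ((∫ x, frobSq (σ₁ x - σ₂ x) ∂m) + 6*ε))^2 := by
    rw [GCaux.frobSq_eq_sq_norm]
    exact pow_le_pow_left₀ (norm_nonneg _) htri 2
  refine hfin.trans ?_
  have hnum := GCaux.final_numeric hε0 hε1 hI0 hN0 hIN
  linarith
end
end
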